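/- Let m > 0, k_x > 0, k_v > 0, θ₀ ∈ [0, π/2), and write s = sin θ₀. If the constant c satisfies 0 < c < min{ k_x·k_v·(1 − s)² · ( k_x·(1 − s) + k_v²·(1 + s)²/(4m) )⁻¹ , k_v·(1 − s) }, then the symmetric 2×2 matrix W₁ = [[ c·k_x·(1 − s)/m , −c·k_v·(1 + s)/(2m) ], [ −c·k_v·(1 + s)/(2m) , k_v·(1 − s) − c ]] is positive definite. -/

import Mathlib

/-- The matrix W₁ from the translational Lyapunov analysis is positive definite
under the stated bound on the cross-term coefficient c. -/
theorem W1_posDef (m kx kv θ₀ c : ℝ)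
    (hm : 0 < m) (hkx : 0 < kx) (hkv : 0 < kv)
    (hθ₀ : 0 ≤ θ₀) (hθ₀' : θ₀ < Real.pi / 2)
    (s : ℝ) (hs : s = Real.sin θ₀)
    (hc : 0 < c)
    (hcbound : c < min
      (kx * kv * (1 - s) ^ 2 * (kx * (1 - s) + kv ^ 2 * (1 + s) ^ 2 / (4 * m))⁻¹)
      (kv * (1 - s))) :
    (!![c * kx * (1 - s) / m, -(c * kv * (1 + s) / (2 * m));
        -(c * kv * (1 + s) / (2 * m)), kv * (1 - s) - c] : Matrix (Fin 2) (Fin 2) ℝ).PosDef := by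
  have hs0 : 0 ≤ s := by
    rw [hs]; exact Real.sin_nonneg_of_nonneg_of_le_pi hθ₀ (le_trans hθ₀'.le (by linarith [Real.pi_pos]))
  have hs1 : s < 1 := by
    rw [hs]
    calc Real.sin θ₀ < Real.sin (Real.pi / 2) :=
          Real.sin_lt_sin_of_lt_of_le_pi_div_two (by linarith [Real.pi_pos]) le_rfl hθ₀'
      _ = 1 := Real.sin_pi_div_two
  have h1s : 0 < 1 - s := by linarith
  have hc2 := (lt_min_iff.mp hcbound).2
  have hc1 := (lt_min_iff.mp hcbound).1
  have hden : 0 < kx * (1 - s) + kv ^ 2 * (1 + s) ^ 2 / (4 * m) := by positivity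
  have hc1' : c * (kx * (1 - s) + kv ^ 2 * (1 + s) ^ 2 / (4 * m)) < kx * kv * (1 - s) ^ 2 := by
    rw [← div_eq_mul_inv, lt_div_iff₀ hden] at hc1
    exact hc1
  have hc1'' : c * kx * (1 - s) * (4 * m) + c * (kv ^ 2 * (1 + s) ^ 2)
      < kx * kv * (1 - s) ^ 2 * (4 * m) := by
    have h := mul_lt_mul_of_pos_right hc1' (by positivity : (0:ℝ) < 4 * m)
    have hm4 : (4 * m) ≠ 0 := by positivity
    field_simp at h
    nlinarith [h]
  set a := c * kx * (1 - s) / m with ha_def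
  set b := c * kv * (1 + s) / (2 * m) with hb_def
  set d := kv * (1 - s) - c with hd_def
  have ha : 0 < a := by rw [ha_def]; positivity
  have hd : 0 < d := by rw [hd_def]; linarith
  have key : b ^ 2 < a * d := by
    rw [ha_def, hb_def, hd_def, div_pow, div_mul_eq_mul_div,
      div_lt_div_iff₀ (by positivity) (by positivity)]
    nlinarith [mul_lt_mul_of_pos_right hc1'' (mul_pos hc hm)]
  clear_value a b d
  clear hc1 hc1' hc1'' hden hcbound hc2 hs
  constructor
  · ext i j
    fin_cases i <;> fin_cases j <;> simp [Matrix.conjTranspose_apply]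
  · intro x hx
    have hx' : x 0 ≠ 0 ∨ x 1 ≠ 0 := by
      by_contra h
      push_neg at h
      apply hx
      ext i; fin_cases i <;> simp [h.1, h.2]
    have hexp : (x.sum fun i xi => x.sum fun j xj => star xi * (!![a, -b; -b, d] : Matrix (Fin 2) (Fin 2) ℝ) i j * xj)
        = a * (x 0) ^ 2 - 2 * b * (x 0) * (x 1) + d * (x 1) ^ 2 := by
      simp [Finsupp.sum_fintype, Fin.sum_univ_two]
      ring
    rw [hexp]
    rcases hx' with h0 | h1
    · nlinarith [sq_nonneg (d * x 1 - b * x 0),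
        mul_pos (sub_pos.mpr key) (sq_pos_of_ne_zero h0), hd.le]
    · nlinarith [sq_nonneg (a * x 0 - b * x 1),
        mul_pos (sub_pos.mpr key) (sq_pos_of_ne_zero h1), ha.le]
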